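/- The monoidal sum is ill-defined on phase-equivalence classes in FdHilb: it is NOT the case that for all linear maps f, f', g, g' : ℂ →ₗ[ℂ] ℂ with TensorProduct.map f (LinearMap.adjoint f) = TensorProduct.map f' (LinearMap.adjoint f') and TensorProduct.map g (LinearMap.adjoint g) = TensorProduct.map g' (LinearMap.adjoint g'), one has TensorProduct.map (f ⊞ g) (LinearMap.adjoint (f ⊞ g)) = TensorProduct.map (f' ⊞ g') (LinearMap.adjoint (f' ⊞ g')), where f ⊞ g denotes the direct-sum operator on WithLp 2 (ℂ × ℂ) acting as f on the first coordinate and as g on the second. (A witness is f = f' = g = id and g' = multiplication by Complex.I.) -/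

import Mathlib

noncomputable def dirSum (f g : ℂ →ₗ[ℂ] ℂ) :
    WithLp 2 (ℂ × ℂ) →ₗ[ℂ] WithLp 2 (ℂ × ℂ) :=
  (WithLp.linearEquiv 2 ℂ (ℂ × ℂ)).symm.toLinearMap ∘ₗ
    (LinearMap.prodMap f g) ∘ₗ (WithLp.linearEquiv 2 ℂ (ℂ × ℂ)).toLinearMap

lemma adjoint_dirSum (f g : ℂ →ₗ[ℂ] ℂ) :
    LinearMap.adjoint (dirSum f g) = dirSum (LinearMap.adjoint f) (LinearMap.adjoint g) := by
  symm
  rw [LinearMap.eq_adjoint_iff]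
  intro x y
  have h1 := LinearMap.adjoint_inner_left (𝕜 := ℂ) f y.fst x.fst
  have h2 := LinearMap.adjoint_inner_left (𝕜 := ℂ) g y.snd x.snd
  simp only [RCLike.inner_apply] at h1 h2
  simp [dirSum, WithLp.prod_inner_apply]
  rw [h1, h2]

lemma adjoint_id' : LinearMap.adjoint (LinearMap.id : ℂ →ₗ[ℂ] ℂ) = LinearMap.id := by
  symm; rw [LinearMap.eq_adjoint_iff]; intro x y; rfl

lemma adjoint_smul_id : LinearMap.adjoint (Complex.I • (LinearMap.id : ℂ →ₗ[ℂ] ℂ)) =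
    (-Complex.I) • (LinearMap.id : ℂ →ₗ[ℂ] ℂ) := by
  symm
  rw [LinearMap.eq_adjoint_iff]
  intro x y
  simp [RCLike.inner_apply]
  ring

theorem stmt_13 :
    ¬ (∀ f f' g g' : ℂ →ₗ[ℂ] ℂ,
      TensorProduct.map f (LinearMap.adjoint f) =
        TensorProduct.map f' (LinearMap.adjoint f') →
      TensorProduct.map g (LinearMap.adjoint g) =
        TensorProduct.map g' (LinearMap.adjoint g') →
      TensorProduct.map (dirSum f g) (LinearMap.adjoint (dirSum f g)) =
        TensorProduct.map (dirSum f' g') (LinearMap.adjoint (dirSum f' g'))) := by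
  intro h
  have h2 : TensorProduct.map (LinearMap.id : ℂ →ₗ[ℂ] ℂ) (LinearMap.adjoint LinearMap.id) =
      TensorProduct.map (Complex.I • LinearMap.id)
        (LinearMap.adjoint (Complex.I • (LinearMap.id : ℂ →ₗ[ℂ] ℂ))) := by
    rw [adjoint_smul_id, adjoint_id']
    apply TensorProduct.ext'
    intro x y
    show x ⊗ₜ[ℂ] y = (Complex.I • x) ⊗ₜ[ℂ] ((-Complex.I) • y)
    rw [TensorProduct.smul_tmul_smul]
    norm_num [mul_neg, Complex.I_mul_I]
  have key := h LinearMap.id LinearMap.id LinearMap.id (Complex.I • LinearMap.id) rfl h2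
  rw [adjoint_dirSum, adjoint_dirSum, adjoint_id', adjoint_smul_id] at key
  set e₁ : WithLp 2 (ℂ × ℂ) := (WithLp.equiv 2 (ℂ × ℂ)).symm (1, 0) with he₁
  set e₂ : WithLp 2 (ℂ × ℂ) := (WithLp.equiv 2 (ℂ × ℂ)).symm (0, 1) with he₂
  have hkey := congrArg (fun T => T (e₂ ⊗ₜ[ℂ] e₁)) key
  simp only [TensorProduct.map_tmul] at hkey
  set B : WithLp 2 (ℂ × ℂ) →ₗ[ℂ] WithLp 2 (ℂ × ℂ) →ₗ[ℂ] ℂ :=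
    ((LinearMap.mul ℂ ℂ).compl₁₂ (LinearMap.snd ℂ ℂ ℂ) (LinearMap.fst ℂ ℂ ℂ)).compl₁₂
      (WithLp.linearEquiv 2 ℂ (ℂ × ℂ)).toLinearMap
      (WithLp.linearEquiv 2 ℂ (ℂ × ℂ)).toLinearMap with hB
  have hfin := congrArg (TensorProduct.lift B) hkey
  simp only [TensorProduct.lift.tmul] at hfin
  simp [hB, dirSum, he₁, he₂] at hfin
  rw [Complex.ext_iff] at hfin
  simp at hfin
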